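/- Let Ψ⁽³⁾(u,v,w) = u²(1−√(u/w))² / (v + u²(1−√(u/w))²) on the domain D = {(u,v,w) : w > u > 0, v > 0}, and let C = (μ/(1−Λp), (μΛ)²p(1−p)/(1−Λp)², μ/(1−Λp)³) with μ > 0, Λ > 0, p ∈ (0,1), Λp < 1. Then ∂Ψ⁽³⁾/∂v (C) = −(1−Λp)²/(μΛ)² and ∂Ψ⁽³⁾/∂w (C) = (1−Λp)⁴(1−p)/(μΛ). -/

import Mathlib

/-- The function Ψ⁽³⁾(u,v,w) = u²(1−√(u/w))² / (v + u²(1−√(u/w))²). -/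
noncomputable def Psi3 (u v w : ℝ) : ℝ :=
  u ^ 2 * (1 - Real.sqrt (u / w)) ^ 2 / (v + u ^ 2 * (1 - Real.sqrt (u / w)) ^ 2)

set_option maxHeartbeats 1000000 in
/-- At the point C = (μ/(1−Λp), (μΛ)²p(1−p)/(1−Λp)², μ/(1−Λp)³), the partial
derivatives of Ψ⁽³⁾ satisfy ∂Ψ⁽³⁾/∂v (C) = −(1−Λp)²/(μΛ)² and
∂Ψ⁽³⁾/∂w (C) = (1−Λp)⁴(1−p)/(μΛ). -/
theorem stmt18 (μ Λ p : ℝ) (hμ : 0 < μ) (hΛ : 0 < Λ) (hp : 0 < p) (hp1 : p < 1)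
    (hΛp : Λ * p < 1) :
    deriv (fun v => Psi3 (μ / (1 - Λ * p)) v (μ / (1 - Λ * p) ^ 3))
        ((μ * Λ) ^ 2 * p * (1 - p) / (1 - Λ * p) ^ 2)
      = -(1 - Λ * p) ^ 2 / (μ * Λ) ^ 2 ∧
    deriv (fun w => Psi3 (μ / (1 - Λ * p)) ((μ * Λ) ^ 2 * p * (1 - p) / (1 - Λ * p) ^ 2) w)
        (μ / (1 - Λ * p) ^ 3)
      = (1 - Λ * p) ^ 4 * (1 - p) / (μ * Λ) := by
  have ha : (0:ℝ) < 1 - Λ * p := by linarith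
  set a : ℝ := 1 - Λ * p with ha_def
  have hμ0 : μ ≠ 0 := ne_of_gt hμ
  have hΛ0 : Λ ≠ 0 := ne_of_gt hΛ
  have hp0 : p ≠ 0 := ne_of_gt hp
  have ha0 : a ≠ 0 := ne_of_gt ha
  set u₀ : ℝ := μ / a with hu₀
  set w₀ : ℝ := μ / a ^ 3 with hw₀
  set v₀ : ℝ := (μ * Λ) ^ 2 * p * (1 - p) / a ^ 2 with hv₀
  have hu₀pos : 0 < u₀ := div_pos hμ (by positivity)
  have hw₀0 : w₀ ≠ 0 := ne_of_gt (div_pos hμ (by positivity))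
  have hv₀pos : 0 < v₀ := by
    apply div_pos _ (by positivity)
    have : 0 < 1 - p := by linarith
    positivity
  have hratio : u₀ / w₀ = a ^ 2 := by
    rw [hu₀, hw₀]
    field_simp
  have hs : Real.sqrt (u₀ / w₀) = a := by
    rw [hratio, Real.sqrt_sq ha.le]
  have hΛp1 : 1 - a = Λ * p := by rw [ha_def]; ring
  -- the constant c = u₀² (Λ p)²
  have hc : u₀ ^ 2 * (1 - Real.sqrt (u₀ / w₀)) ^ 2 = μ ^ 2 * Λ ^ 2 * p ^ 2 / a ^ 2 := by
    rw [hs, hΛp1, hu₀]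
    field_simp
  constructor
  · -- derivative in v
    have key : ∀ v : ℝ, Psi3 u₀ v w₀
        = (μ ^ 2 * Λ ^ 2 * p ^ 2 / a ^ 2) / (v + μ ^ 2 * Λ ^ 2 * p ^ 2 / a ^ 2) := by
      intro v; rw [Psi3, hc]
    set c : ℝ := μ ^ 2 * Λ ^ 2 * p ^ 2 / a ^ 2 with hcdef
    have hden : v₀ + c ≠ 0 := by
      have : 0 < c := by rw [hcdef]; positivity
      positivity
    have hD : HasDerivAt (fun v : ℝ => c / (v + c)) (-(v₀ + c)⁻¹ ^ 2 * c) v₀ := by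
      have h1 : HasDerivAt (fun v : ℝ => v + c) 1 v₀ := (hasDerivAt_id v₀).add_const c
      simpa [div_eq_mul_inv] using ((h1.inv hden).const_mul c).congr_deriv (by ring)
    have : deriv (fun v => Psi3 u₀ v w₀) v₀ = -(v₀ + c)⁻¹ ^ 2 * c := by
      rw [funext key]; exact hD.deriv
    rw [this]
    have hvc : v₀ + c = μ ^ 2 * Λ ^ 2 * p / a ^ 2 := by
      rw [hv₀, hcdef]; field_simp; ring
    rw [hvc, hcdef]
    field_simp
  · -- derivative in w
    have h1 : HasDerivAt (fun w : ℝ => u₀ / w) (u₀ * -((w₀ ^ 2)⁻¹)) w₀ := by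
      simpa [div_eq_mul_inv] using (hasDerivAt_inv hw₀0).const_mul u₀
    have hx0 : u₀ / w₀ ≠ 0 := by rw [hratio]; positivity
    have h2 : HasDerivAt (fun w : ℝ => Real.sqrt (u₀ / w))
        (1 / (2 * Real.sqrt (u₀ / w₀)) * (u₀ * -((w₀ ^ 2)⁻¹))) w₀ :=
      (Real.hasDerivAt_sqrt hx0).comp w₀ h1
    have h3 : HasDerivAt (fun w : ℝ => 1 - Real.sqrt (u₀ / w))
        (-(1 / (2 * Real.sqrt (u₀ / w₀)) * (u₀ * -((w₀ ^ 2)⁻¹)))) w₀ := h2.const_sub 1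
    have h4 := h3.pow 2
    have h5 : HasDerivAt (fun y : ℝ => u₀ ^ 2 * (1 - Real.sqrt (u₀ / y)) ^ 2)
        (μ * Λ * p * a ^ 2) w₀ := by
      refine (h4.const_mul (u₀ ^ 2)).congr_deriv ?_
      push_cast
      rw [hs, hΛp1, hu₀, hw₀]
      field_simp
    have h6 := h5.const_add v₀
    have hden : v₀ + u₀ ^ 2 * (1 - Real.sqrt (u₀ / w₀)) ^ 2 ≠ 0 := by
      have h := sq_nonneg (1 - Real.sqrt (u₀ / w₀))
      have hu2 : (0:ℝ) ≤ u₀ ^ 2 := sq_nonneg _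
      nlinarith [hv₀pos]
    have h7 := h5.div h6 hden
    simp only [Psi3]
    rw [HasDerivAt.deriv (f := fun w : ℝ => u₀ ^ 2 * (1 - Real.sqrt (u₀ / w)) ^ 2 / (v₀ + u₀ ^ 2 * (1 - Real.sqrt (u₀ / w)) ^ 2)) h7]
    have e2 : v₀ + u₀ ^ 2 * (1 - Real.sqrt (u₀ / w₀)) ^ 2 = μ ^ 2 * Λ ^ 2 * p / a ^ 2 := by
      rw [hs, hΛp1, hv₀, hu₀]
      field_simp
      ring
    rw [e2, hc]
    field_simp
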